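/- arXiv:2008.09535 — 5 statements merged into one kernel-verified Lean document; each statement's English description precedes it below -/
import Mathlib

section
/- For every n ≥ 1, the map φ sending an antichain α on n sources to the function f_α : Finset (Fin n) → Bool defined by f_α(b) = true if and only if there exists a ∈ α with a ⊆ b is well-defined (each f_α is a parthood distribution) and is a bijection from the set of antichains on n sources onto the set of parthood distributions on n sources; moreover it is order-reflecting in the sense that for all antichains α, β: α ⪯ β (in the Crampton–Loizou order) if and only if for every b ⊆ Fin n, f_β(b) = true implies f_α(b) = true. -/
/-- A parthood distribution on `n` sources. -/
def IsPD (n : ℕ) (f : Finset (Fin n) → Bool) : Prop :=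
  (∀ a b : Finset (Fin n), a ⊆ b → f a = true → f b = true) ∧
  f ∅ = false ∧ f Finset.univ = true

/-- An antichain on `n` sources. -/
def IsAC (n : ℕ) (α : Finset (Finset (Fin n))) : Prop :=
  α.Nonempty ∧ (∀ a ∈ α, a.Nonempty) ∧ ∀ a ∈ α, ∀ b ∈ α, ¬ a ⊂ b

/-- The Crampton–Loizou order on antichains. -/
def CLle (n : ℕ) (α β : Finset (Finset (Fin n))) : Prop :=
  ∀ b ∈ β, ∃ a ∈ α, a ⊆ b

/-- The map sending an antichain to its parthood distribution. -/
def phi (n : ℕ) (α : Finset (Finset (Fin n))) : Finset (Fin n) → Bool :=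
  fun b => decide (∃ a ∈ α, a ⊆ b)

lemma phi_eq_true {n : ℕ} {α : Finset (Finset (Fin n))} {b : Finset (Fin n)} :
    phi n α b = true ↔ ∃ a ∈ α, a ⊆ b := by
  simp [phi]

lemma exists_min {n : ℕ} (f : Finset (Fin n) → Bool) :
    ∀ b : Finset (Fin n), f b = true →
      ∃ a, a ⊆ b ∧ f a = true ∧ ∀ c, c ⊂ a → f c = false := by
  intro b
  induction b using Finset.strongInductionOn with
  | _ b ih =>
    intro hb
    by_cases h : ∀ c, c ⊂ b → f c = false
    · exact ⟨b, subset_rfl, hb, h⟩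
    · push_neg at h
      obtain ⟨c, hc, hfc⟩ := h
      obtain ⟨a, ha1, ha2, ha3⟩ := ih c hc (by simpa using hfc)
      exact ⟨a, ha1.trans hc.subset, ha2, ha3⟩

theorem antichains_parthood_iso (n : ℕ) (hn : 1 ≤ n) :
    (∀ α : Finset (Finset (Fin n)), IsAC n α → IsPD n (phi n α)) ∧
    (∀ α β : Finset (Finset (Fin n)), IsAC n α → IsAC n β →
      phi n α = phi n β → α = β) ∧
    (∀ f : Finset (Fin n) → Bool, IsPD n f →
      ∃ α : Finset (Finset (Fin n)), IsAC n α ∧ phi n α = f) ∧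
    (∀ α β : Finset (Finset (Fin n)), IsAC n α → IsAC n β →
      (CLle n α β ↔ ∀ b : Finset (Fin n), phi n β b = true → phi n α b = true)) := by
  refine ⟨?_, ?_, ?_, ?_⟩
  · rintro α ⟨hne, hnonempty, hanti⟩
    refine ⟨?_, ?_, ?_⟩
    · intro a b hab ha
      rw [phi_eq_true] at ha ⊢
      obtain ⟨x, hx, hxa⟩ := ha
      exact ⟨x, hx, hxa.trans hab⟩
    · rw [Bool.eq_false_iff]
      intro h
      rw [phi_eq_true] at h
      obtain ⟨a, ha, hsub⟩ := h
      obtain ⟨x, hx⟩ := hnonempty a ha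
      exact absurd (hsub hx) (by simp)
    · rw [phi_eq_true]
      obtain ⟨a, ha⟩ := hne
      exact ⟨a, ha, Finset.subset_univ a⟩
  · -- injectivity
    have key : ∀ α β : Finset (Finset (Fin n)), IsAC n α → IsAC n β →
        phi n α = phi n β → α ⊆ β := by
      rintro α β ⟨_, _, hantiA⟩ _ hphi a ha
      have h1 : phi n β a = true := by
        rw [← hphi, phi_eq_true]; exact ⟨a, ha, subset_rfl⟩
      rw [phi_eq_true] at h1
      obtain ⟨b, hb, hba⟩ := h1
      have h2 : phi n α b = true := by
        rw [hphi, phi_eq_true]; exact ⟨b, hb, subset_rfl⟩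
      rw [phi_eq_true] at h2
      obtain ⟨a', ha', ha'b⟩ := h2
      have : a' = a := by
        by_contra hne
        exact hantiA a' ha' a ha (ssubset_of_subset_of_ne (ha'b.trans hba) hne)
      have hab : a = b := Finset.Subset.antisymm (this ▸ ha'b) hba
      exact hab ▸ hb
    intro α β hα hβ hphi
    exact Finset.Subset.antisymm (key α β hα hβ hphi) (key β α hβ hα hphi.symm)
  · -- surjectivity
    rintro f ⟨hmono, hempty, huniv⟩
    refine ⟨Finset.univ.filter (fun a => f a = true ∧ ∀ c, c ⊂ a → f c = false),
      ⟨?_, ?_, ?_⟩, ?_⟩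
    · obtain ⟨a, ha1, ha2, ha3⟩ := exists_min f Finset.univ huniv
      exact ⟨a, Finset.mem_filter.mpr ⟨Finset.mem_univ a, ha2, ha3⟩⟩
    · intro a ha
      simp only [Finset.mem_filter] at ha
      rcases Finset.eq_empty_or_nonempty a with rfl | h
      · rw [hempty] at ha; simp at ha
      · exact h
    · intro a ha b hb hab
      simp only [Finset.mem_filter] at ha hb
      exact absurd ha.2.1 (by rw [hb.2.2 a hab]; simp)
    · funext b
      rcases hb : f b with _ | _
      · rw [Bool.eq_false_iff]
        intro h
        rw [phi_eq_true] at h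
        obtain ⟨a, ha, hab⟩ := h
        simp only [Finset.mem_filter] at ha
        have := hmono a b hab ha.2.1
        rw [hb] at this; simp at this
      · rw [phi_eq_true]
        obtain ⟨a, ha1, ha2, ha3⟩ := exists_min f b hb
        exact ⟨a, Finset.mem_filter.mpr ⟨Finset.mem_univ a, ha2, ha3⟩, ha1⟩
  · rintro α β ⟨_, _, _⟩ ⟨_, _, _⟩
    constructor
    · intro hle b hb
      rw [phi_eq_true] at hb ⊢
      obtain ⟨b', hb', hsub⟩ := hb
      obtain ⟨a, ha, hab⟩ := hle b' hb'
      exact ⟨a, ha, hab.trans hsub⟩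
    · intro h b hb
      have : phi n α b = true := h b (phi_eq_true.mpr ⟨b, hb, subset_rfl⟩)
      rw [phi_eq_true] at this
      exact this
end

section
/- For every n ≥ 1 and all antichains α, β on n sources: α ⪯ β in the Crampton–Loizou order if and only if for every valuation V : Fin n → Bool, (there exists b ∈ β such that V i = true for all i ∈ b) implies (there exists a ∈ α such that V i = true for all i ∈ a). In other words, the Crampton–Loizou order on antichains coincides with the relation of logical implication between the corresponding disjunctions of conjunctions of propositional variables, read semantically over all valuations. -/
theorem CL_order_iff_logical_implication (n : ℕ) (hn : 1 ≤ n)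
    (α β : Finset (Finset (Fin n))) (hα : IsAC n α) (hβ : IsAC n β) :
    CLle n α β ↔
      ∀ V : Fin n → Bool,
        (∃ b ∈ β, ∀ i ∈ b, V i = true) → (∃ a ∈ α, ∀ i ∈ a, V i = true) := by
  constructor
  · rintro h V ⟨b, hb, hV⟩
    obtain ⟨a, ha, hab⟩ := h b hb
    exact ⟨a, ha, fun i hi => hV i (hab hi)⟩
  · intro h b hb
    obtain ⟨a, ha, hV⟩ := h (fun i => decide (i ∈ b)) ⟨b, hb, fun i hi => by simp [hi]⟩
    exact ⟨a, ha, fun i hi => by simpa using hV i hi⟩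
end

section
/- For every n ≥ 1 and every nonempty finite tuple (a_1, …, a_m) of nonempty subsets of Fin n, there exists a unique antichain α on n sources such that for every parthood distribution f on n sources: (f a_k = true for all k = 1, …, m) if and only if (f a = true for all a ∈ α). In particular, the redundancy condition determined by any tuple of collections of sources is invariant under permutation and repetition of the collections and under removal of any collection that is a proper superset of another, and every such condition coincides with the condition of a unique antichain. -/
/-- The canonical PD of a set of nonempty sets. -/
lemma isPD_of_set (n : ℕ) (hn : 1 ≤ n) (α : Finset (Finset (Fin n)))
    (hne : α.Nonempty) (hnonempty : ∀ b ∈ α, b.Nonempty) :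
    IsPD n (fun s => decide (∃ c ∈ α, c ⊆ s)) := by
  refine ⟨?_, ?_, ?_⟩
  · intro s t hst h
    simp only [decide_eq_true_eq] at *
    obtain ⟨c, hc, hcs⟩ := h
    exact ⟨c, hc, hcs.trans hst⟩
  · simp only [decide_eq_false_iff_not]
    rintro ⟨c, hc, hcs⟩
    exact (hnonempty c hc).ne_empty (Finset.subset_empty.mp hcs)
  · simp only [decide_eq_true_eq]
    obtain ⟨c, hc⟩ := hne
    exact ⟨c, hc, Finset.subset_univ c⟩

theorem redundancy_condition_reduces_to_unique_antichain (n : ℕ) (hn : 1 ≤ n)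
    (m : ℕ) (hm : 1 ≤ m) (a : Fin m → Finset (Fin n)) (ha : ∀ k, (a k).Nonempty) :
    ∃! α : Finset (Finset (Fin n)), IsAC n α ∧
      ∀ f : Finset (Fin n) → Bool, IsPD n f →
        ((∀ k : Fin m, f (a k) = true) ↔ ∀ b ∈ α, f b = true) := by
  classical
  set S : Finset (Finset (Fin n)) := Finset.image a Finset.univ with hS
  have hSne : S.Nonempty := Finset.Nonempty.image ⟨⟨0, hm⟩, Finset.mem_univ _⟩ a
  -- minimal elements of S
  set α : Finset (Finset (Fin n)) := S.filter (fun b => ∀ c ∈ S, ¬ c ⊂ b) with hα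
  have hmin : ∀ s ∈ S, ∃ c ∈ α, c ⊆ s := by
    intro s hs
    have hne : (S.filter (fun c => c ⊆ s)).Nonempty := ⟨s, by simp [hs]⟩
    obtain ⟨c, hc, hcmin⟩ : ∃ c ∈ S.filter (fun c => c ⊆ s), ∀ d ∈ S.filter (fun c => c ⊆ s), ¬ d < c := by
      obtain ⟨c, hc⟩ := Finset.exists_minimal hne
      exact ⟨c, hc.prop, fun d hd hdc => hc.not_lt hd hdc⟩
    simp only [Finset.mem_filter] at hc
    refine ⟨c, ?_, hc.2⟩
    simp only [hα, Finset.mem_filter]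
    refine ⟨hc.1, fun d hd hdc => ?_⟩
    exact hcmin d (Finset.mem_filter.mpr ⟨hd, hdc.subset.trans hc.2⟩) hdc
  have hαS : α ⊆ S := Finset.filter_subset _ _
  have hαne : α.Nonempty := by
    obtain ⟨s, hs⟩ := hSne
    obtain ⟨c, hc, _⟩ := hmin s hs
    exact ⟨c, hc⟩
  have hαnonempty : ∀ b ∈ α, b.Nonempty := by
    intro b hb
    obtain ⟨k, _, hk⟩ := Finset.mem_image.mp (hαS hb)
    exact hk ▸ ha k
  have hαAC : IsAC n α := by
    refine ⟨hαne, hαnonempty, fun b hb c hc hbc => ?_⟩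
    exact (Finset.mem_filter.mp hc).2 b (hαS hb) hbc
  -- key: for antichains with ∃-sub property in both directions, equality
  have key : ∀ β γ : Finset (Finset (Fin n)), IsAC n β → IsAC n γ →
      (∀ b ∈ β, ∃ c ∈ γ, c ⊆ b) → (∀ c ∈ γ, ∃ d ∈ β, d ⊆ c) → β ⊆ γ := by
    intro β γ hβ hγ h1 h2 b hb
    obtain ⟨c, hc, hcb⟩ := h1 b hb
    obtain ⟨d, hd, hdc⟩ := h2 c hc
    have hdb : d = b := by
      have := hβ.2.2 d hd b hb
      exact le_antisymm (hdc.trans hcb) (by by_contra h; exact this (lt_of_le_of_ne (hdc.trans hcb) (fun e => h (e ▸ le_refl _))))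
    have : c = b := le_antisymm hcb (hdb ▸ hdc)
    exact this ▸ hc
  refine ⟨α, ⟨hαAC, ?_⟩, ?_⟩
  · intro f hf
    constructor
    · intro h b hb
      obtain ⟨k, _, hk⟩ := Finset.mem_image.mp (hαS hb)
      exact hk ▸ h k
    · intro h k
      have : a k ∈ S := Finset.mem_image.mpr ⟨k, Finset.mem_univ _, rfl⟩
      obtain ⟨c, hc, hcs⟩ := hmin _ this
      exact hf.1 c (a k) hcs (h c hc)
  · -- uniqueness
    intro β ⟨hβAC, hβcond⟩
    have hequiv : ∀ f, IsPD n f → ((∀ b ∈ β, f b = true) ↔ ∀ b ∈ α, f b = true) := by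
      intro f hf
      rw [← hβcond f hf]
      constructor
      · intro h b hb
        obtain ⟨k, _, hk⟩ := Finset.mem_image.mp (hαS hb)
        exact hk ▸ h k
      · intro h k
        have : a k ∈ S := Finset.mem_image.mpr ⟨k, Finset.mem_univ _, rfl⟩
        obtain ⟨c, hc, hcs⟩ := hmin _ this
        exact hf.1 c (a k) hcs (h c hc)
    have hab : ∀ b ∈ β, ∃ c ∈ α, c ⊆ b := by
      intro b hb
      have hpd := isPD_of_set n hn α hαne hαnonempty
      have := (hequiv _ hpd).mpr (fun c hc => by
        simp only [decide_eq_true_eq]; exact ⟨c, hc, le_refl c⟩) b hb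
      simpa using this
    have hba : ∀ c ∈ α, ∃ d ∈ β, d ⊆ c := by
      intro c hc
      have hpd := isPD_of_set n hn β hβAC.1 hβAC.2.1
      have := (hequiv _ hpd).mp (fun d hd => by
        simp only [decide_eq_true_eq]; exact ⟨d, hd, le_refl d⟩) c hc
      simpa using this
    exact le_antisymm (key β α hβAC hαAC hab hba) (key α β hαAC hβAC hba hab)
end

section
/- For n = 3, let f_top : Finset (Fin 3) → Bool be the parthood distribution with f_top a = true iff a = Finset.univ. Then the set of parthood distributions f satisfying f {0} = f {1} = f {2} = false and f {0,1} = f {0,2} = f {1,2} = false equals the set of parthood distributions f satisfying f {0,1} = f {0,2} = f {1,2} = false, and both sets equal the singleton {f_top}. (The strong-synergy parthood conditions associated with the antichains {{1},{2},{3}} and {{1,2},{1,3},{2,3}} coincide, so the strong-synergy system of equations contains two identical rows and cannot determine the information atoms uniquely.) -/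
/-- The parthood distribution on 3 sources that is true exactly on the full set. -/
def fTop : Finset (Fin 3) → Bool := fun a => decide (a = Finset.univ)

lemma cover3 : ∀ a : Finset (Fin 3), a = Finset.univ ∨ a ⊆ {0, 1} ∨ a ⊆ {0, 2} ∨ a ⊆ {1, 2} := by
  decide

lemma key (f : Finset (Fin 3) → Bool) (hf : IsPD 3 f)
    (h01 : f {0, 1} = false) (h02 : f {0, 2} = false) (h12 : f {1, 2} = false) :
    f = fTop := by
  funext a
  rcases cover3 a with h | h | h | h
  · simp [h, fTop, hf.2.2]
  all_goals {
    have hne : a ≠ Finset.univ := by rintro rfl; revert h; decide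
    have : f a = false := by
      cases hfa : f a
      · rfl
      · have := hf.1 a _ h hfa
        simp [h01, h02, h12] at this
    simp [this, fTop, hne] }

theorem strong_synergy_conditions_coincide :
    ({f : Finset (Fin 3) → Bool | IsPD 3 f ∧
        f {0} = false ∧ f {1} = false ∧ f {2} = false ∧
        f {0, 1} = false ∧ f {0, 2} = false ∧ f {1, 2} = false} =
      {f : Finset (Fin 3) → Bool | IsPD 3 f ∧
        f {0, 1} = false ∧ f {0, 2} = false ∧ f {1, 2} = false}) ∧
    ({f : Finset (Fin 3) → Bool | IsPD 3 f ∧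
        f {0, 1} = false ∧ f {0, 2} = false ∧ f {1, 2} = false} = {fTop}) := by
  constructor
  · ext f
    simp only [Set.mem_setOf_eq]
    constructor
    · rintro ⟨hf, _, _, _, h01, h02, h12⟩
      exact ⟨hf, h01, h02, h12⟩
    · rintro ⟨hf, h01, h02, h12⟩
      have := key f hf h01 h02 h12
      subst this
      refine ⟨hf, ?_, ?_, ?_, h01, h02, h12⟩ <;> decide
  · ext f
    simp only [Set.mem_setOf_eq, Set.mem_singleton_iff]
    constructor
    · rintro ⟨hf, h01, h02, h12⟩
      exact key f hf h01 h02 h12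
    · rintro rfl
      refine ⟨⟨?_, ?_, ?_⟩, ?_, ?_, ?_⟩ <;> decide
end

section
/- Let n ≥ 1 and let f, g be parthood distributions on n sources. Then g is a child of f — i.e., (for all b, f b = true implies g b = true) and there is exactly one set made true by g but not by f — if and only if there exists a nonempty set b* ⊆ Fin n such that f b* = false, f c = true for every c with b* ⊊ c ⊆ Fin n, g b* = true, and g b = f b for every b ≠ b*. (Correctness of the child-generating construction: children of f are obtained exactly by switching to true a single false set of f all of whose proper supersets are already true under f.) -/
theorem child_generating_construction (n : ℕ) (hn : 1 ≤ n)
    (f g : Finset (Fin n) → Bool) (hf : IsPD n f) (hg : IsPD n g) :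
    ((∀ b : Finset (Fin n), f b = true → g b = true) ∧
      (∃! b : Finset (Fin n), g b = true ∧ f b = false)) ↔
    (∃ bstar : Finset (Fin n), bstar.Nonempty ∧
      f bstar = false ∧
      (∀ c : Finset (Fin n), bstar ⊂ c → f c = true) ∧
      g bstar = true ∧
      (∀ b : Finset (Fin n), b ≠ bstar → g b = f b)) := by
  obtain ⟨fmono, fempty, funiv⟩ := hf
  obtain ⟨gmono, gempty, guniv⟩ := hg
  constructor
  · rintro ⟨hle, b, ⟨hgb, hfb⟩, huniq⟩
    refine ⟨b, ?_, hfb, ?_, hgb, ?_⟩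
    · rcases Finset.eq_empty_or_nonempty b with rfl | h
      · simp [gempty] at hgb
      · exact h
    · intro c hc
      have hgc : g c = true := gmono b c hc.1 hgb
      by_contra hfc
      have : c = b := huniq c ⟨hgc, by simpa using hfc⟩
      exact hc.2 (le_of_eq this)
    · intro a ha
      cases hfa : f a with
      | true => exact hle a hfa
      | false =>
        cases hga : g a with
        | true => exact absurd (huniq a ⟨hga, hfa⟩) ha
        | false => rfl
  · rintro ⟨b, hne, hfb, hsup, hgb, hrest⟩
    refine ⟨?_, b, ⟨hgb, hfb⟩, ?_⟩
    · intro a hfa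
      by_cases h : a = b
      · rw [h, hfb] at hfa; exact absurd hfa (by simp)
      · rw [hrest a h]; exact hfa
    · rintro a ⟨hga, hfa⟩
      by_contra h
      rw [hrest a h, hfa] at hga
      simp at hga
end
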